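/- Unique equilibrium of the robust RVI TD stability ODE (proved in the stability Lemma for Algorithm 1): suppose that for each (s,a) the set 𝒫(s,a) ⊆ Δ(S) is nonempty and the infimum below is attained, that f : (S → ℝ) → ℝ satisfies f(x + c·e) = f(x) + c and f(c·x) = c·f(x) for all x : S → ℝ and all c ∈ ℝ, and that for every transition-kernel selection P, every h : S → ℝ with P^π h = h is a constant vector (a consequence of the unichain assumption). If W : S → ℝ satisfies W(s) = Σ_a π(a|s)·(min_{p ∈ 𝒫(s,a)} p·W) − f(W) for every s ∈ S, then W = 0. -/

import Mathlib

theorem robust_rvi_td_unique_equilibrium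
    {S A : Type*} [Fintype S] [Nonempty S] [Fintype A] [Nonempty A]
    (π : S → A → ℝ)
    (hπ : ∀ s, (∀ a, 0 ≤ π s a) ∧ ∑ a, π s a = 1)
    (U : S → A → Set (S → ℝ))
    (hUne : ∀ s a, (U s a).Nonempty)
    (hUsimplex : ∀ s a, ∀ p ∈ U s a, (∀ s', 0 ≤ p s') ∧ ∑ s', p s' = 1)
    (f : (S → ℝ) → ℝ)
    (hfshift : ∀ (x : S → ℝ) (c : ℝ), f (fun s => x s + c) = f x + c)
    (hfhom : ∀ (x : S → ℝ) (c : ℝ), f (fun s => c * x s) = c * f x)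
    -- every fixed point of `P^π` is constant, for every kernel selection (unichain)
    (hUnichain : ∀ P : S → A → S → ℝ, (∀ s a, P s a ∈ U s a) →
      ∀ h : S → ℝ, (∀ s, ∑ a, π s a * ∑ s', P s a s' * h s' = h s) →
        ∃ c : ℝ, ∀ s, h s = c)
    (W : S → ℝ)
    -- the infimum in the equilibrium equation is attained
    (hmin : ∀ s a, ∃ p ∈ U s a, ∀ p' ∈ U s a,
      ∑ s', p s' * W s' ≤ ∑ s', p' s' * W s')
    (hW : ∀ s, W s = (∑ a, π s a *
        sInf {x : ℝ | ∃ p ∈ U s a, x = ∑ s', p s' * W s'}) - f W) :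
    W = 0 := by
  classical
  -- choose minimizing kernel selection
  choose P hPmem hPmin using hmin
  -- the infimum is attained at P
  have hsinf : ∀ s a, sInf {x : ℝ | ∃ p ∈ U s a, x = ∑ s', p s' * W s'}
      = ∑ s', P s a s' * W s' := by
    intro s a
    apply IsLeast.csInf_eq
    constructor
    · exact ⟨P s a, hPmem s a, rfl⟩
    · rintro x ⟨p, hp, rfl⟩
      exact hPmin s a p hp
  -- key identity: P^π W = W + f W
  have hkey : ∀ s, ∑ a, π s a * ∑ s', P s a s' * W s' = W s + f W := by
    intro s
    have := hW s
    simp only [hsinf] at this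
    linarith
  -- bound: for any s and bound b with W ≤ b pointwise, P^π W s ≤ b
  have hbd : ∀ s (b : ℝ), (∀ s', W s' ≤ b) →
      ∑ a, π s a * ∑ s', P s a s' * W s' ≤ b := by
    intro s b hb
    calc ∑ a, π s a * ∑ s', P s a s' * W s'
        ≤ ∑ a, π s a * b := by
          apply Finset.sum_le_sum
          intro a _
          apply mul_le_mul_of_nonneg_left _ ((hπ s).1 a)
          calc ∑ s', P s a s' * W s' ≤ ∑ s', P s a s' * b := by
                apply Finset.sum_le_sum
                intro s' _
                exact mul_le_mul_of_nonneg_left (hb s')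
                  ((hUsimplex s a _ (hPmem s a)).1 s')
            _ = b := by
                rw [← Finset.sum_mul, (hUsimplex s a _ (hPmem s a)).2, one_mul]
      _ = b := by rw [← Finset.sum_mul, (hπ s).2, one_mul]
  have hbd' : ∀ s (b : ℝ), (∀ s', b ≤ W s') →
      b ≤ ∑ a, π s a * ∑ s', P s a s' * W s' := by
    intro s b hb
    calc b = ∑ a, π s a * b := by rw [← Finset.sum_mul, (hπ s).2, one_mul]
      _ ≤ ∑ a, π s a * ∑ s', P s a s' * W s' := by
          apply Finset.sum_le_sum
          intro a _
          apply mul_le_mul_of_nonneg_left _ ((hπ s).1 a)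
          calc b = ∑ s', P s a s' * b := by
                rw [← Finset.sum_mul, (hUsimplex s a _ (hPmem s a)).2, one_mul]
            _ ≤ ∑ s', P s a s' * W s' := by
                apply Finset.sum_le_sum
                intro s' _
                exact mul_le_mul_of_nonneg_left (hb s')
                  ((hUsimplex s a _ (hPmem s a)).1 s')
  -- f W = 0, via argmax/argmin
  obtain ⟨smax, hsmax⟩ := Finite.exists_max W
  obtain ⟨smin, hsmin⟩ := Finite.exists_min W
  have hle : f W ≤ 0 := by
    have h1 := hbd smax (W smax) hsmax
    rw [hkey smax] at h1
    linarith
  have hge : 0 ≤ f W := by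
    have h1 := hbd' smin (W smin) hsmin
    rw [hkey smin] at h1
    linarith
  have hfW : f W = 0 := le_antisymm hle hge
  -- W is a fixed point of P^π, hence constant
  obtain ⟨c, hc⟩ := hUnichain P hPmem W (by
    intro s
    rw [hkey s, hfW, add_zero])
  -- f of constant c is c
  have hf0 : f 0 = 0 := by
    have := hfhom 0 0
    simp at this
    exact this
  have hWc : W = fun _ => c := funext hc
  have : f W = c := by
    rw [hWc]
    have := hfshift 0 c
    simpa [hf0] using this
  have hc0 : c = 0 := by rw [← this, hfW]
  rw [hWc, hc0]
  rfl
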